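/- Let v(η) = 2η² log η − η² + i(log 2)/(2π) − 1/8 and u(η) = v(η) + η, both holomorphic on the upper half-plane with the principal logarithm. Suppose a in the upper half-plane satisfies u(a) = 2n for an integer n, the closed disc of radius 1 around a lies in the upper half-plane, |a| is sufficiently large, and |log a| ≥ 1. Then v(η) = 2n has a solution b with |b − a| < 1; moreover b − a = 1/(4 log a) + O(1/|a|). -/

import Mathlib

open Complex Metric Set


/-- The function v(η) = 2η² log η − η² + i(log 2)/(2π) − 1/8, with the principal
branch of the complex logarithm. -/
noncomputable def v (η : ℂ) : ℂ :=
  2 * η ^ 2 * Complex.log η - η ^ 2 +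
    Complex.I * (Real.log 2 : ℂ) / (2 * (Real.pi : ℂ)) - 1 / 8

/-- The function u(η) = v(η) + η. -/
noncomputable def u (η : ℂ) : ℂ := v η + η

lemma hasDerivAt_v {x : ℂ} (hx : x ∈ Complex.slitPlane) (hx0 : x ≠ 0) :
    HasDerivAt v (4 * x * Complex.log x) x := by
  have h1 : HasDerivAt (fun z : ℂ => 2 * z ^ 2 * Complex.log z)
      (2 * ((2 : ℕ) * x ^ (2 - 1)) * Complex.log x + 2 * x ^ 2 * x⁻¹) x :=
    ((hasDerivAt_pow 2 x).const_mul 2).mul (Complex.hasDerivAt_log hx)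
  have h2 := ((h1.sub (hasDerivAt_pow 2 x)).add_const
      (Complex.I * (Real.log 2 : ℂ) / (2 * (Real.pi : ℂ)))).sub_const (1 / 8)
  refine h2.congr_deriv ?_
  push_cast
  have hx2 : x ^ 2 * x⁻¹ = x := by field_simp
  linear_combination (2 : ℂ) * hx2

theorem stmt_11 :
    ∃ C > (0 : ℝ), ∃ R > (0 : ℝ), ∀ a : ℂ, 0 < a.im →
      (∀ z : ℂ, ‖z - a‖ ≤ 1 → 0 < z.im) →
      R < ‖a‖ → 1 ≤ ‖Complex.log a‖ →
      ∀ n : ℤ, u a = 2 * n →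
        ∃ b : ℂ, v b = 2 * n ∧ ‖b - a‖ < 1 ∧
          ‖b - a - 1 / (4 * Complex.log a)‖ ≤ C / ‖a‖ := by
  refine ⟨1, one_pos, 10, by norm_num, ?_⟩
  intro a haim hball hR hlog n hu
  set A : ℝ := ‖a‖ with hA
  set L : ℝ := ‖Complex.log a‖ with hL
  have hA10 : 10 < A := hR
  have hL1 : 1 ≤ L := hlog
  have hA0 : (0:ℝ) < ‖a‖ := by rw [← hA]; linarith
  have hL0 : (0:ℝ) < ‖Complex.log a‖ := by rw [← hL]; linarith
  have ha0 : a ≠ 0 := norm_pos_iff.mp hA0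
  have hloga0 : Complex.log a ≠ 0 := norm_pos_iff.mp hL0
  set k : ℂ := 4 * a * Complex.log a with hk
  have hk0 : k ≠ 0 := by
    simp only [hk]; exact mul_ne_zero (mul_ne_zero (by norm_num) ha0) hloga0
  have hkabs : ‖k‖ = 4 * A * L := by
    simp [hk, norm_mul, hA, hL]
  -- properties of points of the ball
  set s : Set ℂ := closedBall a (1/2) with hs
  have hmem : ∀ x ∈ s, ‖x - a‖ ≤ 1/2 := by
    intro x hx
    simpa [Complex.dist_eq] using (mem_closedBall.1 hx)
  have him : ∀ x ∈ s, 0 < x.im := fun x hx => hball x (le_trans (hmem x hx) (by norm_num))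
  have hslit : ∀ x ∈ s, x ∈ Complex.slitPlane := fun x hx =>
    Complex.mem_slitPlane_iff.2 (Or.inr (ne_of_gt (him x hx)))
  have hne : ∀ x ∈ s, x ≠ 0 := by
    intro x hx h
    have := him x hx; rw [h] at this; simp at this
  have habs : ∀ x ∈ s, A - 1/2 ≤ ‖x‖ := by
    intro x hx
    have h1 : ‖a‖ - ‖x‖ ≤ ‖x - a‖ := by
      have := norm_sub_norm_le a x
      rw [norm_sub_rev] at this
      simpa using this
    have := hmem x hx
    linarith
  -- log is Lipschitz on s
  have hinvA : (A - 1/2)⁻¹ ≤ 2/A := by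
    rw [inv_le_comm₀ (by linarith) (by positivity), inv_div]
    linarith
  have hlogd : ∀ x ∈ s, ‖Complex.log x - Complex.log a‖ ≤ (A - 1/2)⁻¹ * (1/2) := by
    intro x hx
    have hmvt := Convex.norm_image_sub_le_of_norm_hasDerivWithin_le
      (f := Complex.log) (f' := fun z => z⁻¹) (s := s) (C := (A - 1/2)⁻¹)
      (fun z hz => (Complex.hasDerivAt_log (hslit z hz)).hasDerivWithinAt)
      (fun z hz => by
        rw [norm_inv]
        apply inv_anti₀ (by linarith) (habs z hz))
      (convex_closedBall a (1/2)) (mem_closedBall_self (by norm_num)) hx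
    have h2 : ‖x - a‖ ≤ 1/2 := hmem x hx
    calc ‖Complex.log x - Complex.log a‖
        ≤ (A - 1/2)⁻¹ * ‖x - a‖ := hmvt
      _ ≤ (A - 1/2)⁻¹ * (1/2) := by
          exact mul_le_mul_of_nonneg_left h2 (le_of_lt (inv_pos.2 (by linarith)))
  -- the approximating linear map and its inverse
  set f' : ℂ →L[ℂ] ℂ := ContinuousLinearMap.mul ℂ ℂ k with hf'
  have hf'app : ∀ z : ℂ, f' z = k * z := fun z => rfl
  set f'symm : f'.NonlinearRightInverse :=
    { toFun := fun y => k⁻¹ * y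
      nnnorm := ‖k‖₊⁻¹
      bound' := fun y => by simp [norm_mul, norm_inv]
      right_inv' := fun y => by
        rw [hf'app]; field_simp } with hf'symm
  set c : NNReal := ⟨2 * L + 5, by positivity⟩ with hc
  have hcc : (c : ℝ) = 2 * L + 5 := rfl
  -- the approximation property
  have hf : ApproximatesLinearOn v f' s c := by
    intro x hx y hy
    have hmvt := Convex.norm_image_sub_le_of_norm_hasDerivWithin_le
      (f := fun z => v z - k * z) (f' := fun z => 4 * z * Complex.log z - k) (s := s)
      (C := (c : ℝ))
      (fun z hz => ((hasDerivAt_v (hslit z hz) (hne z hz)).sub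
        (by simpa using (hasDerivAt_id z).const_mul k)).hasDerivWithinAt)
      (fun z hz => by
        have hz1 : ‖z - a‖ ≤ 1/2 := hmem z hz
        have hz2 : ‖Complex.log z - Complex.log a‖ ≤ (A - 1/2)⁻¹ * (1/2) :=
          hlogd z hz
        have hz2' : ‖Complex.log z - Complex.log a‖ ≤ 1/4 := by
          have h9 : (A - 1/2)⁻¹ * (1/2) ≤ (2/A) * (1/2) := by
            apply mul_le_mul_of_nonneg_right hinvA (by norm_num)
          have h10 : (2/A) * (1/2) ≤ 1/4 := by
            rw [div_mul_eq_mul_div, div_le_div_iff₀ (by linarith) (by norm_num)]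
            linarith
          linarith
        have hz3 : ‖Complex.log z‖ ≤ L + 1/4 := by
          calc ‖Complex.log z‖
              = ‖Complex.log z - Complex.log a + Complex.log a‖ := by ring_nf
            _ ≤ ‖Complex.log z - Complex.log a‖ + L := by
                rw [hL]; exact norm_add_le _ _
            _ ≤ L + 1/4 := by linarith [hz2']
        have heq : 4 * z * Complex.log z - k
            = 4 * (z - a) * Complex.log z + 4 * a * (Complex.log z - Complex.log a) := by
          rw [hk]; ring
        show ‖4 * z * Complex.log z - k‖ ≤ (c : ℝ)
        rw [heq]
        calc ‖4 * (z - a) * Complex.log z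
              + 4 * a * (Complex.log z - Complex.log a)‖
            ≤ ‖4 * (z - a) * Complex.log z‖
              + ‖4 * a * (Complex.log z - Complex.log a)‖ :=
              norm_add_le _ _
          _ ≤ 4 * (1/2) * (L + 1/4) + 4 * A * ((A - 1/2)⁻¹ * (1/2)) := by
              rw [norm_mul, norm_mul, norm_mul, norm_mul]
              gcongr
              · simp
              · simp
          _ ≤ (c : ℝ) := by
              have h11 : 4 * A * ((A - 1/2)⁻¹ * (1/2)) ≤ 4 := by
                calc 4 * A * ((A - 1/2)⁻¹ * (1/2)) = 2 * (A * (A - 1/2)⁻¹) := by ring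
                  _ ≤ 2 * (A * (2/A)) := by
                      apply mul_le_mul_of_nonneg_left _ (by norm_num)
                      exact mul_le_mul_of_nonneg_left hinvA (by positivity)
                  _ = 4 := by field_simp; norm_num
              rw [hcc]; linarith
        )
      (convex_closedBall a (1/2)) hy hx
    have hmvt' : ‖v x - k * x - (v y - k * y)‖ ≤ (c : ℝ) * ‖x - y‖ := hmvt
    have heq2 : v x - k * x - (v y - k * y) = v x - v y - f' (x - y) := by
      rw [hf'app]; ring
    rw [heq2] at hmvt'
    exact hmvt' 
  -- surjectivity
  have hsub : closedBall a (1/2) ⊆ s := Subset.rfl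
  have hsurj := hf.surjOn_closedBall_of_nonlinearRightInverse f'symm
    (by norm_num : (0:ℝ) ≤ 1/2) hsub
  have hnn : ((f'symm.nnnorm : ℝ))⁻¹ = 4 * A * L := by
    rw [hf'symm]
    simp only [NNReal.coe_inv, coe_nnnorm, inv_inv, hkabs]
  have hva : v a = 2 * n - a := by
    have hu' : v a + a = 2 * n := hu
    linear_combination hu'
  have htarget : (2 * n : ℂ) ∈ closedBall (v a) ((((f'symm.nnnorm : ℝ))⁻¹ - c) * (1/2)) := by
    rw [mem_closedBall, Complex.dist_eq, hva, hnn, hcc]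
    have : (2 * n : ℂ) - (2 * n - a) = a := by ring
    rw [this, ← hA]
    nlinarith [mul_nonneg (by linarith : (0:ℝ) ≤ 4*A - 2) (by linarith : (0:ℝ) ≤ L - 1)]
  obtain ⟨b, hb, hvb⟩ := hsurj htarget
  have hba : ‖b - a‖ ≤ 1/2 := hmem b hb
  refine ⟨b, hvb, by linarith, ?_⟩
  -- final estimate
  have hkey := hf b hb a (mem_closedBall_self (by norm_num))
  rw [hf'app, hvb, hva] at hkey
  have heq3 : (2 * n : ℂ) - (2 * n - a) - k * (b - a) = a - k * (b - a) := by ring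
  rw [heq3] at hkey
  have hkey2 : ‖a - k * (b - a)‖ ≤ (c : ℝ) * (1/2) := by
    calc ‖a - k * (b - a)‖ ≤ (c : ℝ) * ‖b - a‖ := hkey
      _ ≤ (c : ℝ) * (1/2) := by
          apply mul_le_mul_of_nonneg_left hba (NNReal.coe_nonneg c)
  have heq4 : b - a - 1 / (4 * Complex.log a) = (k * (b - a) - a) / k := by
    rw [hk]
    field_simp
  rw [heq4, norm_div, hkabs, norm_sub_rev]
  rw [div_le_div_iff₀ (by nlinarith) (by positivity)]
  have hc7 : (c : ℝ) ≤ 7 * L := by rw [hcc]; linarith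
  have h8 : ‖a - k * (b - a)‖ ≤ 7 * L / 2 := by linarith
  have hA0' : (0:ℝ) < A := by linarith
  nlinarith [mul_le_mul_of_nonneg_right h8 hA0'.le]
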